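/- Let $(a_n)$ and $(b_n)$ be strictly increasing sequences of positive integers with $L_n = b_n/a_n \to L = p/q$, where $p, q \in \mathbb{N}$ are relatively prime, and set $\delta_n = L_n - L$. Suppose $\delta_n > 0$ for all $n$ and $a_n \delta_n \to k \in (0, \infty)$. Then for every $m \in \mathbb{Z}$ and every $t > 0$, $\frac{1}{a_n} \sum_{j=1}^{\lfloor a_n t \rfloor} \widehat{f}_{m,L}(j L_n) \to \frac{1}{q} \sum_{\eta=1}^{q} \frac{1}{k} \int_0^{k t} \widehat{f}_{m,L}(\eta L + x)\, dx$ as $n \to \infty$. -/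

import Mathlib

open Filter MeasureTheory

/-- `f_{m,L}(x) = (|x-m+1|^{1/3} + |x-m-L|^{1/3} - |x-m|^{1/3} - |x-m+1-L|^{1/3})^3`. -/
noncomputable def fmL (L : ℝ) (m : ℤ) (x : ℝ) : ℝ :=
  (|x - m + 1| ^ ((1 : ℝ) / 3) + |x - m - L| ^ ((1 : ℝ) / 3)
    - |x - m| ^ ((1 : ℝ) / 3) - |x - m + 1 - L| ^ ((1 : ℝ) / 3)) ^ 3

/-- `f̂_{m,L}(x) = f_{m,L}({x})`, where `{x}` is the fractional part of `x`. -/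
noncomputable def fmLhat (L : ℝ) (m : ℤ) (x : ℝ) : ℝ := fmL L m (Int.fract x)

lemma fmL_continuous (L : ℝ) (m : ℤ) : Continuous (fmL L m) := by
  unfold fmL
  have h : ∀ g : ℝ → ℝ, Continuous g → Continuous (fun x : ℝ => |g x| ^ ((1:ℝ)/3)) := by
    intro g hg
    apply Continuous.rpow_const (continuous_abs.comp hg)
    intro x; right; norm_num
  exact ((((h _ (by continuity)).add (h _ (by continuity))).sub (h _ (by continuity))).sub
    (h _ (by continuity))).pow 3

lemma fmLhat_bound (L : ℝ) (m : ℤ) : ∃ B, 0 ≤ B ∧ ∀ y, |fmLhat L m y| ≤ B := by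
  obtain ⟨x0, -, hx0⟩ := (isCompact_Icc (a := (0:ℝ)) (b := 1)).exists_isMaxOn
    (Set.nonempty_Icc.2 zero_le_one)
    ((continuous_abs.comp (fmL_continuous L m)).continuousOn)
  refine ⟨|fmL L m x0|, abs_nonneg _, fun y => ?_⟩
  exact hx0 ⟨Int.fract_nonneg y, (Int.fract_lt_one y).le⟩

lemma fmLhat_measurable (L : ℝ) (m : ℤ) : Measurable (fmLhat L m) :=
  (fmL_continuous L m).measurable.comp measurable_fract

lemma fract_continuousAt {y : ℝ} (hy : ∀ z : ℤ, y ≠ (z:ℝ)) : ContinuousAt Int.fract y := by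
  have h1 : (⌊y⌋ : ℝ) < y := lt_of_le_of_ne (Int.floor_le y) (Ne.symm (hy _))
  have h2 : y < ⌊y⌋ + 1 := Int.lt_floor_add_one y
  have hev : (fun x => x - (⌊y⌋:ℝ)) =ᶠ[nhds y] Int.fract := by
    filter_upwards [Ioo_mem_nhds h1 h2] with x hx
    rw [Int.fract, Int.floor_eq_iff.2 ⟨hx.1.le, hx.2⟩]
  exact (continuousAt_id.sub continuousAt_const).congr hev

lemma fmLhat_continuousAt (L : ℝ) (m : ℤ) {y : ℝ} (hy : ∀ z : ℤ, y ≠ (z:ℝ)) :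
    ContinuousAt (fmLhat L m) y :=
  (fmL_continuous L m).continuousAt.comp (fract_continuousAt hy)

lemma fmLhat_add_int (L : ℝ) (m : ℤ) (x : ℝ) (z : ℤ) : fmLhat L m (x + z) = fmLhat L m x := by
  unfold fmLhat; rw [Int.fract_add_intCast]

lemma II_of_bounded {f : ℝ → ℝ} (hf : Measurable f) {B : ℝ} (hB : ∀ x, |f x| ≤ B) (c d : ℝ) :
    IntervalIntegrable f volume c d := by
  rw [intervalIntegrable_iff]
  refine MeasureTheory.Integrable.mono' (g := fun _ => B) ?_ hf.aestronglyMeasurable.restrict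
    (Filter.Eventually.of_forall fun x => hB x)
  exact integrableOn_const measure_Ioc_lt_top.ne

lemma riemann_sum_tendsto (g : ℝ → ℝ) (B : ℝ) (hB : ∀ x, |g x| ≤ B)
    (hgm : Measurable g) (D : Set ℝ) (hD : D.Countable)
    (hcont : ∀ x ∉ D, ContinuousAt g x)
    (T θ : ℝ) (hθ0 : 0 ≤ θ) (hθ1 : θ ≤ 1)
    (h : ℕ → ℝ) (hh : ∀ n, 0 < h n) (hh0 : Tendsto h atTop (nhds 0))
    (M : ℕ → ℕ) (hM : Tendsto (fun n => h n * M n) atTop (nhds T)) :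
    Tendsto (fun n => h n * ∑ s ∈ Finset.range (M n + 1), g ((θ + s) * h n)) atTop
      (nhds (∫ x in (0:ℝ)..T, g x)) := by
  set pt : ℕ → ℝ → ℝ := fun n x => (θ + ((⌈x / h n⌉ : ℝ) - 1)) * h n with hpt_def
  set G : ℕ → ℝ → ℝ := fun n x => g (pt n x) with hG_def
  have hGmeas : ∀ n, Measurable (G n) := by
    intro n
    apply hgm.comp
    apply Measurable.mul _ measurable_const
    apply Measurable.add measurable_const
    apply Measurable.sub _ measurable_const
    exact Measurable.comp (measurable_from_top (f := (Int.cast : ℤ → ℝ)))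
      ((measurable_id.div_const (h n)).ceil)
  have hGb : ∀ n x, |G n x| ≤ B := fun n x => hB _
  have hGint : ∀ n c d, IntervalIntegrable (G n) volume c d := fun n c d =>
    II_of_bounded (hGmeas n) (hGb n) c d
  -- identity: the Riemann sum is the integral of the step function
  have hid : ∀ n, h n * ∑ s ∈ Finset.range (M n + 1), g ((θ + s) * h n)
      = ∫ x in (0:ℝ)..((M n + 1 : ℕ) * h n), G n x := by
    intro n
    have key : ∀ s : ℕ, (∫ x in ((s:ℝ) * h n)..(((s:ℕ)+1 : ℕ) * h n), G n x)
        = g ((θ + s) * h n) * h n := by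
      intro s
      have hle : (s:ℝ) * h n ≤ ((s+1 : ℕ):ℝ) * h n := by
        apply mul_le_mul_of_nonneg_right _ (hh n).le
        push_cast; linarith
      have hcongr : ∀ x ∈ Set.uIoc ((s:ℝ) * h n) (((s+1:ℕ):ℝ) * h n),
          G n x = g ((θ + s) * h n) := by
        intro x hx
        rw [Set.uIoc_of_le hle] at hx
        have hc : ⌈x / h n⌉ = (s:ℤ) + 1 := by
          rw [Int.ceil_eq_iff]
          constructor
          · push_cast
            rw [lt_div_iff₀ (hh n)]
            have := hx.1
            push_cast at this ⊢
            linarith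
          · rw [div_le_iff₀ (hh n)]
            have := hx.2
            push_cast at this ⊢
            linarith
        simp only [hG_def, hpt_def, hc]
        push_cast
        ring_nf
      rw [intervalIntegral.integral_congr_ae (Filter.Eventually.of_forall hcongr),
        intervalIntegral.integral_const, smul_eq_mul]
      push_cast
      ring
    have hsum := intervalIntegral.sum_integral_adjacent_intervals
      (a := fun i : ℕ => (i:ℝ) * h n) (n := M n + 1) (μ := volume) (f := G n)
      (fun i _ => hGint n _ _)
    simp only [key] at hsum
    rw [← Finset.sum_mul] at hsum
    rw [mul_comm, hsum]
    norm_num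
  -- convergence of ∫_0^T G n to ∫_0^T g
  have part1 : Tendsto (fun n => ∫ x in (0:ℝ)..T, G n x) atTop (nhds (∫ x in (0:ℝ)..T, g x)) := by
    apply intervalIntegral.tendsto_integral_filter_of_dominated_convergence (bound := fun _ => B)
    · exact Filter.Eventually.of_forall fun n => (hGmeas n).aestronglyMeasurable.restrict
    · exact Filter.Eventually.of_forall fun n => Filter.Eventually.of_forall fun x _ => by
        simpa [Real.norm_eq_abs] using hGb n x
    · exact intervalIntegrable_const
    · have hae : ∀ᵐ x : ℝ, x ∉ D := by
        rw [MeasureTheory.ae_iff]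
        simpa using hD.measure_zero volume
      filter_upwards [hae] with x hx _
      have hpt : Tendsto (fun n => pt n x) atTop (nhds x) := by
        rw [← tendsto_sub_nhds_zero_iff]
        refine squeeze_zero_norm (a := h) (fun n => ?_) hh0
        have h1 : x / h n ≤ (⌈x / h n⌉ : ℝ) := Int.le_ceil _
        have h2 : (⌈x / h n⌉ : ℝ) < x / h n + 1 := Int.ceil_lt_add_one _
        have hhn := hh n
        have h1' : x ≤ (⌈x / h n⌉ : ℝ) * h n := by
          rw [← div_le_iff₀ hhn]; exact h1
        have h2' : ((⌈x / h n⌉ : ℝ) - 1) * h n < x := by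
          rw [← lt_div_iff₀ hhn]; linarith
        rw [Real.norm_eq_abs, abs_le]
        constructor
        · show -(h n) ≤ pt n x - x
          simp only [hpt_def]
          nlinarith
        · show pt n x - x ≤ h n
          simp only [hpt_def]
          nlinarith
      exact ((hcont x hx).tendsto.comp hpt)
  -- tail part
  set c : ℕ → ℝ := fun n => ((M n + 1 : ℕ) : ℝ) * h n with hc_def
  have hctend : Tendsto c atTop (nhds T) := by
    have : Tendsto (fun n => h n * M n + h n) atTop (nhds (T + 0)) := hM.add hh0
    rw [add_zero] at this
    apply this.congr
    intro n
    simp only [hc_def]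
    push_cast
    ring
  have part2 : Tendsto (fun n => ∫ x in T..(c n), G n x) atTop (nhds 0) := by
    have h0 : Tendsto (fun n => B * |c n - T|) atTop (nhds 0) := by
      have := (tendsto_const_nhds (x := B) (f := atTop)).mul ((hctend.sub_const T).abs)
      simpa using this
    refine squeeze_zero_norm (fun n => ?_) h0
    have := intervalIntegral.norm_integral_le_of_norm_le_const (C := B)
      (f := G n) (a := T) (b := c n) (fun x _ => by simpa [Real.norm_eq_abs] using hGb n x)
    simpa [abs_sub_comm] using this
  have final := part1.add part2
  rw [add_zero] at final
  apply final.congr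
  intro n
  rw [intervalIntegral.integral_add_adjacent_intervals (hGint n 0 T) (hGint n T (c n)),
    ← hid n]

lemma sum_residue (q : ℕ) (hq : 0 < q) (N : ℤ) (F : ℤ → ℝ) :
    ∑ j ∈ Finset.Icc (1:ℤ) N, F j
      = ∑ η ∈ Finset.Icc 1 q, ∑ s ∈ Finset.range (((N - η) / q + 1).toNat),
          F ((η:ℤ) + q * s) := by
  have hq' : (0:ℤ) < q := by exact_mod_cast hq
  rw [Finset.sum_sigma']
  refine Finset.sum_nbij' (i := fun j : ℤ => (⟨((j - 1) % q).toNat + 1, ((j - 1) / q).toNat⟩ : Σ _ : ℕ, ℕ))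
    (j := fun x : Σ _ : ℕ, ℕ => (x.1 : ℤ) + q * x.2)
    ?_ ?_ ?_ ?_ ?_
  · -- i maps into the sigma set
    intro j hj
    simp only [Finset.mem_Icc] at hj
    simp only [Finset.mem_sigma, Finset.mem_Icc, Finset.mem_range]
    have hmod0 : 0 ≤ (j - 1) % q := Int.emod_nonneg _ (ne_of_gt hq')
    have hmodq : (j - 1) % q < q := Int.emod_lt_of_pos _ hq'
    have hdiv0 : 0 ≤ (j - 1) / q := Int.ediv_nonneg (by omega) hq'.le
    have htm : (((j - 1) % q).toNat : ℤ) = (j - 1) % q := Int.toNat_of_nonneg hmod0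
    have htd : (((j - 1) / q).toNat : ℤ) = (j - 1) / q := Int.toNat_of_nonneg hdiv0
    have hdm := Int.mul_ediv_add_emod (j - 1) q
    refine ⟨⟨by omega, by omega⟩, ?_⟩
    rw [Int.lt_toNat, htd]
    have hle : ((j - 1) / q) * q ≤ N - ((((j - 1) % q).toNat + 1 : ℕ) : ℤ) := by
      push_cast
      rw [htm]
      linarith [hdm, mul_comm ((j - 1) / (q:ℤ)) (q:ℤ)]
    have hfin := (Int.le_ediv_iff_mul_le hq').mpr hle
    omega
  · -- j maps into Icc 1 N
    rintro ⟨η, s⟩ hx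
    simp only [Finset.mem_sigma, Finset.mem_Icc, Finset.mem_range] at hx
    obtain ⟨⟨hη1, hη2⟩, hs⟩ := hx
    rw [Int.lt_toNat] at hs
    have hs' : (s:ℤ) ≤ (N - η) / q := by omega
    have h3 := (Int.le_ediv_iff_mul_le hq').mp hs'
    have h1 : (1:ℤ) ≤ η := by exact_mod_cast hη1
    have h2 : (0:ℤ) ≤ (q:ℤ) * s := by positivity
    simp only [Finset.mem_Icc]
    exact ⟨by linarith, by linarith [mul_comm (s:ℤ) (q:ℤ)]⟩
  · -- left inverse
    intro j hj
    simp only [Finset.mem_Icc] at hj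
    have hmod0 : 0 ≤ (j - 1) % q := Int.emod_nonneg _ (ne_of_gt hq')
    have hdiv0 : 0 ≤ (j - 1) / q := Int.ediv_nonneg (by omega) hq'.le
    have htm : (((j - 1) % q).toNat : ℤ) = (j - 1) % q := Int.toNat_of_nonneg hmod0
    have htd : (((j - 1) / q).toNat : ℤ) = (j - 1) / q := Int.toNat_of_nonneg hdiv0
    have hdm := Int.mul_ediv_add_emod (j - 1) q
    push_cast
    rw [htm, htd]
    linarith
  · -- right inverse
    rintro ⟨η, s⟩ hx
    simp only [Finset.mem_sigma, Finset.mem_Icc, Finset.mem_range] at hx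
    obtain ⟨⟨hη1, hη2⟩, hs⟩ := hx
    have key : ((η:ℤ) + q * s - 1) = (η - 1 : ℤ) + q * s := by ring
    have hmod : ((η:ℤ) + q * s - 1) % q = (η:ℤ) - 1 := by
      rw [key, Int.add_mul_emod_self_left]
      exact Int.emod_eq_of_lt (by omega) (by omega)
    have hdiv : ((η:ℤ) + q * s - 1) / q = s := by
      rw [key, Int.add_mul_ediv_left _ _ (ne_of_gt hq'),
        Int.ediv_eq_zero_of_lt (by omega) (by omega), zero_add]
    show (⟨((((η:ℤ) + q * s) - 1) % q).toNat + 1, ((((η:ℤ) + q * s) - 1) / q).toNat⟩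
        : Σ _ : ℕ, ℕ) = ⟨η, s⟩
    rw [hmod, hdiv]
    have e1 : ((η:ℤ) - 1).toNat + 1 = η := by omega
    have e2 : ((s:ℕ):ℤ).toNat = s := by omega
    rw [e1, e2]
  · -- values agree
    intro j hj
    simp only [Finset.mem_Icc] at hj
    congr 1
    have hmod0 : 0 ≤ (j - 1) % q := Int.emod_nonneg _ (ne_of_gt hq')
    have hdiv0 : 0 ≤ (j - 1) / q := Int.ediv_nonneg (by omega) hq'.le
    have htm : (((j - 1) % q).toNat : ℤ) = (j - 1) % q := Int.toNat_of_nonneg hmod0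
    have htd : (((j - 1) / q).toNat : ℤ) = (j - 1) / q := Int.toNat_of_nonneg hdiv0
    have hdm := Int.mul_ediv_add_emod (j - 1) q
    push_cast
    rw [htm, htd]
    linarith

/-- If `L = p/q` in lowest terms, `L_n = b_n/a_n → L`, `δ_n > 0` for all `n`, and
`a_n δ_n → k ∈ (0,∞)`, then for every `m ∈ ℤ` and `t > 0`,
`(1/a_n) ∑_{j=1}^{⌊a_n t⌋} f̂_{m,L}(j L_n)
  → (1/q) ∑_{η=1}^{q} (1/k) ∫_0^{kt} f̂_{m,L}(ηL + x) dx`. -/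
theorem sum_tendsto_positive_delta_case (a b : ℕ → ℕ) (ha : StrictMono a) (hb : StrictMono b)
    (ha0 : ∀ n, 0 < a n) (hb0 : ∀ n, 0 < b n)
    (p q : ℕ) (hp : 0 < p) (hq : 0 < q) (hpq : Nat.Coprime p q)
    (L : ℝ) (hL : L = (p : ℝ) / (q : ℝ))
    (hconv : Tendsto (fun n => (b n : ℝ) / (a n : ℝ)) atTop (nhds L))
    (hpos : ∀ n, 0 < (b n : ℝ) / (a n : ℝ) - L)
    (k : ℝ) (hkpos : 0 < k)
    (hk : Tendsto (fun n => (a n : ℝ) * ((b n : ℝ) / (a n : ℝ) - L)) atTop (nhds k)) :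
    ∀ (m : ℤ) (t : ℝ), 0 < t →
      Tendsto (fun n =>
        (1 / (a n : ℝ)) * ∑ j ∈ Finset.Icc (1 : ℤ) ⌊(a n : ℝ) * t⌋,
            fmLhat L m ((j : ℝ) * ((b n : ℝ) / (a n : ℝ))))
        atTop
        (nhds ((1 / (q : ℝ)) * ∑ η ∈ Finset.Icc 1 q,
          (1 / k) * ∫ x in (0 : ℝ)..(k * t), fmLhat L m ((η : ℝ) * L + x))) := by
  intro m t ht
  have hq' : (0:ℝ) < q := by exact_mod_cast hq
  have hq0 : (q:ℝ) ≠ 0 := ne_of_gt hq'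
  have hk0 : k ≠ 0 := ne_of_gt hkpos
  have haR : ∀ n, (0:ℝ) < a n := fun n => by exact_mod_cast ha0 n
  have haR0 : ∀ n, (a n : ℝ) ≠ 0 := fun n => ne_of_gt (haR n)
  have haT : Tendsto (fun n => (a n : ℝ)) atTop atTop :=
    tendsto_natCast_atTop_atTop.comp ha.tendsto_atTop
  have hainv : Tendsto (fun n => 1 / (a n : ℝ)) atTop (nhds 0) := by
    exact haT.inv_tendsto_atTop.congr (fun n => by simp [one_div])
  -- the integer sequence e n = q b n - p a n is eventually constant
  set e : ℕ → ℤ := fun n => q * b n - p * a n with he_def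
  have heT : Tendsto (fun n => (e n : ℝ)) atTop (nhds ((q:ℝ) * k)) := by
    apply (hk.const_mul (q:ℝ)).congr
    intro n
    simp only [he_def]
    push_cast
    rw [hL]
    field_simp [haR0 n]
  obtain ⟨n0, hn0⟩ := Metric.tendsto_atTop.mp heT (1/2) (by norm_num)
  have hconst : ∀ n ≥ n0, e n = e n0 := by
    intro n hn
    have h1 := hn0 n hn
    have h2 := hn0 n0 le_rfl
    rw [Real.dist_eq] at h1 h2
    have habs : |((e n - e n0 : ℤ) : ℝ)| < 1 := by
      push_cast
      rw [abs_lt] at h1 h2 ⊢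
      constructor <;> linarith
    have : |e n - e n0| < 1 := by exact_mod_cast habs
    rw [abs_lt] at this
    omega
  have hqk : (q:ℝ) * k = ((e n0 : ℤ) : ℝ) := by
    refine tendsto_nhds_unique heT ?_
    apply tendsto_const_nhds.congr'
    filter_upwards [eventually_ge_atTop n0] with n hn
    exact (congrArg (fun z : ℤ => (z:ℝ)) (hconst n hn)).symm
  -- key relation : b n / a n = L + k / a n for n ≥ n0
  have hbL : ∀ n ≥ n0, (b n : ℝ) / (a n : ℝ) = L + k / (a n : ℝ) := by
    intro n hn
    have h1 : ((e n : ℤ) : ℝ) = (q:ℝ) * k := by rw [hqk, hconst n hn]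
    simp only [he_def] at h1
    push_cast at h1
    rw [hL]
    rw [div_add_div _ _ hq0 (haR0 n), div_eq_div_iff (haR0 n) (mul_ne_zero hq0 (haR0 n))]
    linear_combination (a n : ℝ) * h1
  -- bound for fmLhat
  obtain ⟨B, hB0, hB⟩ := fmLhat_bound L m
  -- the per-residue limits
  have hinner : ∀ η ∈ Finset.Icc 1 q,
      Tendsto (fun n => ((q:ℝ) * k / (a n : ℝ)) *
          ∑ s ∈ Finset.range ((((⌊(a n : ℝ) * t⌋ : ℤ) - η) / q).toNat + 1),
            fmLhat L m ((η:ℝ) * L + (((η:ℝ)/(q:ℝ) + s) * ((q:ℝ) * k / (a n : ℝ)))))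
        atTop (nhds (∫ x in (0:ℝ)..(k * t), fmLhat L m ((η : ℝ) * L + x))) := by
    intro η hη
    simp only [Finset.mem_Icc] at hη
    obtain ⟨hη1, hη2⟩ := hη
    apply riemann_sum_tendsto (g := fun x => fmLhat L m ((η:ℝ) * L + x)) B
      (fun x => hB _)
      ((fmLhat_measurable L m).comp (measurable_id.const_add ((η:ℝ) * L)))
      (Set.range (fun z : ℤ => (z:ℝ) - (η:ℝ) * L)) (Set.countable_range _)
      ?_ (k * t) ((η:ℝ)/(q:ℝ)) (by positivity)
      (by rw [div_le_one hq']; exact_mod_cast hη2)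
      _ (fun n => div_pos (mul_pos hq' hkpos) (haR n)) ?_ _ ?_
    · -- continuity off D
      intro x hx
      have hy : ∀ z : ℤ, (η:ℝ) * L + x ≠ (z:ℝ) := by
        intro z hz
        refine hx ⟨z, ?_⟩
        show (z:ℝ) - (η:ℝ) * L = x
        linarith
      exact (fmLhat_continuousAt L m hy).comp (continuousAt_const.add continuousAt_id)
    · -- h → 0
      have := hainv.const_mul ((q:ℝ) * k)
      rw [mul_zero] at this
      apply this.congr
      intro n
      ring
    · -- h n * M n → k t
      rw [← tendsto_sub_nhds_zero_iff]
      apply squeeze_zero_norm' (a := fun n => k * (2*(q:ℝ)+1) * (1/(a n : ℝ)))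
      · have hev : ∀ᶠ n in atTop, (q:ℝ) ≤ (a n : ℝ) * t := by
          filter_upwards [haT.eventually_ge_atTop ((q:ℝ)/t)] with n hn
          rw [div_le_iff₀ ht] at hn
          exact hn
        filter_upwards [hev] with n hn
        set A := (a n : ℝ) with hA_def
        set Nn : ℤ := ⌊A * t⌋ with hN_def
        have hA : (0:ℝ) < A := haR n
        have hNle : (Nn:ℝ) ≤ A * t := Int.floor_le _
        have hNgt : A * t < Nn + 1 := Int.lt_floor_add_one _
        have hNq : (q:ℤ) ≤ Nn := Int.le_floor.mpr (by exact_mod_cast hn)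
        set d : ℤ := (Nn - η) / q with hd_def
        have hdm := Int.mul_ediv_add_emod (Nn - η) (q:ℤ)
        have hqz : (0:ℤ) < q := by exact_mod_cast hq
        have hmod0 : 0 ≤ (Nn - η) % q := Int.emod_nonneg _ (ne_of_gt hqz)
        have hmodq : (Nn - η) % q < q := Int.emod_lt_of_pos _ hqz
        have hd0 : 0 ≤ d := Int.ediv_nonneg (by omega) hqz.le
        have hMd : ((d.toNat : ℕ) : ℝ) = (d : ℝ) := by exact_mod_cast Int.toNat_of_nonneg hd0
        have hi1 : (q:ℤ) * d ≤ Nn - η := by rw [hd_def]; omega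
        have hi2 : Nn - η < q * d + q := by rw [hd_def]; omega
        have hr1 : (q:ℝ) * (d:ℝ) ≤ (Nn:ℝ) - (η:ℝ) := by exact_mod_cast hi1
        have hr2 : (Nn:ℝ) - (η:ℝ) < (q:ℝ) * (d:ℝ) + q := by exact_mod_cast hi2
        have hη1r : (1:ℝ) ≤ η := by exact_mod_cast hη1
        have hηqr : (η:ℝ) ≤ q := by exact_mod_cast hη2
        have key : (q:ℝ) * k / A * ((d.toNat : ℕ) : ℝ) - k * t = (k / A) * ((q:ℝ) * d - A * t) := by
          rw [hMd]
          field_simp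
        rw [Real.norm_eq_abs, key, abs_mul, abs_of_pos (by positivity : (0:ℝ) < k / A)]
        have habs : |(q:ℝ) * d - A * t| ≤ 2*(q:ℝ)+1 := by
          rw [abs_le]
          constructor <;> linarith
        calc k / A * |(q:ℝ) * d - A * t| ≤ k / A * (2*(q:ℝ)+1) := by
              apply mul_le_mul_of_nonneg_left habs (by positivity)
          _ = k * (2*(q:ℝ)+1) * (1/A) := by ring
      · have := hainv.const_mul (k * (2*(q:ℝ)+1))
        rw [mul_zero] at this
        apply this.congr
        intro n
        ring
  -- eventual identity between the original sums and the residue-class sums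
  have hident : ∀ᶠ n in atTop,
      (1 / (a n : ℝ)) * ∑ j ∈ Finset.Icc (1 : ℤ) ⌊(a n : ℝ) * t⌋,
          fmLhat L m ((j : ℝ) * ((b n : ℝ) / (a n : ℝ)))
      = ∑ η ∈ Finset.Icc 1 q, (1/((q:ℝ)*k)) * (((q:ℝ) * k / (a n : ℝ)) *
          ∑ s ∈ Finset.range ((((⌊(a n : ℝ) * t⌋ : ℤ) - η) / q).toNat + 1),
            fmLhat L m ((η:ℝ) * L + (((η:ℝ)/(q:ℝ) + s) * ((q:ℝ) * k / (a n : ℝ))))) := by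
    have hev : ∀ᶠ n in atTop, (q:ℝ) ≤ (a n : ℝ) * t := by
      filter_upwards [haT.eventually_ge_atTop ((q:ℝ)/t)] with n hn
      rw [div_le_iff₀ ht] at hn
      exact hn
    filter_upwards [hev, eventually_ge_atTop n0] with n hn hn0'
    rw [sum_residue q hq _ _, Finset.mul_sum]
    apply Finset.sum_congr rfl
    intro η hη
    simp only [Finset.mem_Icc] at hη
    obtain ⟨hη1, hη2⟩ := hη
    set A := (a n : ℝ) with hA_def
    set Nn : ℤ := ⌊A * t⌋ with hN_def
    have hA : (0:ℝ) < A := haR n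
    have hNq : (q:ℤ) ≤ Nn := Int.le_floor.mpr (by exact_mod_cast hn)
    have hd0 : 0 ≤ (Nn - η) / q := Int.ediv_nonneg (by omega) (by exact_mod_cast hq.le)
    have hcnt : ((Nn - η) / q + 1).toNat = ((Nn - η) / q).toNat + 1 := by omega
    rw [hcnt]
    have hterm : ∀ s : ℕ, fmLhat L m ((((η:ℤ) + q * s : ℤ) : ℝ) * ((b n : ℝ) / A))
        = fmLhat L m ((η:ℝ) * L + (((η:ℝ)/(q:ℝ) + s) * ((q:ℝ) * k / A))) := by
      intro s
      have harg : (((η:ℤ) + q * s : ℤ) : ℝ) * ((b n : ℝ) / A)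
          = ((η:ℝ) * L + (((η:ℝ)/(q:ℝ) + s) * ((q:ℝ) * k / A))) + ((s * p : ℤ) : ℝ) := by
        push_cast
        rw [hbL n hn0', hL, ← hA_def]
        field_simp
        ring
      rw [harg, fmLhat_add_int]
    calc (1/A) * ∑ s ∈ Finset.range (((Nn - η) / q).toNat + 1),
          fmLhat L m ((((η:ℤ) + q * s : ℤ) : ℝ) * ((b n : ℝ) / A))
        = (1/((q:ℝ)*k)) * (((q:ℝ) * k / A) * ∑ s ∈ Finset.range (((Nn - η) / q).toNat + 1),
          fmLhat L m ((((η:ℤ) + q * s : ℤ) : ℝ) * ((b n : ℝ) / A))) := by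
          rw [← mul_assoc]
          congr 1
          field_simp
      _ = _ := by
          congr 1
          congr 1
          apply Finset.sum_congr rfl
          intro s _
          exact hterm s
  -- conclude
  have hS : Tendsto (fun n => ∑ η ∈ Finset.Icc 1 q, (1/((q:ℝ)*k)) * (((q:ℝ) * k / (a n : ℝ)) *
      ∑ s ∈ Finset.range ((((⌊(a n : ℝ) * t⌋ : ℤ) - η) / q).toNat + 1),
        fmLhat L m ((η:ℝ) * L + (((η:ℝ)/(q:ℝ) + s) * ((q:ℝ) * k / (a n : ℝ))))))
      atTop (nhds (∑ η ∈ Finset.Icc 1 q,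
        (1/((q:ℝ)*k)) * ∫ x in (0:ℝ)..(k * t), fmLhat L m ((η : ℝ) * L + x))) :=
    tendsto_finset_sum _ (fun η hη => (hinner η hη).const_mul _)
  have hval : (1 / (q : ℝ)) * ∑ η ∈ Finset.Icc 1 q,
      (1 / k) * ∫ x in (0 : ℝ)..(k * t), fmLhat L m ((η : ℝ) * L + x)
      = ∑ η ∈ Finset.Icc 1 q,
        (1/((q:ℝ)*k)) * ∫ x in (0:ℝ)..(k * t), fmLhat L m ((η : ℝ) * L + x) := by
    rw [Finset.mul_sum]
    apply Finset.sum_congr rfl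
    intro η _
    rw [← mul_assoc]
    congr 1
    field_simp
  rw [hval]
  exact hS.congr' (Filter.EventuallyEq.symm hident)
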